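/- Let 0 ≤ μ ≤ 1. If A, B are positive definite with 0 < A, B ≤ (1/2)I, and A' = I - A, B' = I - B, then A'∇_μB' - A'!_μB' ≤ A∇_μB - A!_μB in the Löwner order, with equality (when 0 < μ < 1) if and only if A = B. -/

import Mathlib

open Matrix ComplexOrder

/-- Matrix square root via the real continuous functional calculus. -/
noncomputable def msqrt {n : ℕ} (A : Matrix (Fin n) (Fin n) ℂ) :
    Matrix (Fin n) (Fin n) ℂ :=
  cfc Real.sqrt A

/-- The Kubo–Ando mean associated to a representing function `f`:
`A σ_f B = A^{1/2} f(A^{-1/2} B A^{-1/2}) A^{1/2}`. -/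
noncomputable def opMean {n : ℕ} (f : ℝ → ℝ) (A B : Matrix (Fin n) (Fin n) ℂ) :
    Matrix (Fin n) (Fin n) ℂ :=
  msqrt A * cfc f ((msqrt A)⁻¹ * B * (msqrt A)⁻¹) * msqrt A

/-- A function `f : ℝ → ℝ` is operator monotone on `[0,∞)` if it is monotone for the
Löwner order on positive semidefinite matrices of every size. -/
def OperatorMonotone (f : ℝ → ℝ) : Prop :=
  ∀ (n : ℕ) (A B : Matrix (Fin n) (Fin n) ℂ), A.PosSemidef → B.PosSemidef →
    (B - A).PosSemidef → (cfc f B - cfc f A).PosSemidef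

variable {n : ℕ}

private lemma rsmul_eq (r : ℝ) (M : Matrix (Fin n) (Fin n) ℂ) : r • M = (r : ℂ) • M := by
  ext i j
  simp [Matrix.smul_apply, Complex.real_smul]

private lemma psd_add {M N : Matrix (Fin n) (Fin n) ℂ} (hM : M.PosSemidef)
    (hN : N.PosSemidef) : (M + N).PosSemidef :=
  PosSemidef.of_dotProduct_mulVec_nonneg (hM.1.add hN.1) fun x => by
    rw [add_mulVec, dotProduct_add]
    exact add_nonneg (hM.dotProduct_mulVec_nonneg x) (hN.dotProduct_mulVec_nonneg x)

private lemma herm_smul {M : Matrix (Fin n) (Fin n) ℂ} (hM : M.IsHermitian) (r : ℝ) :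
    ((r : ℂ) • M).IsHermitian := by
  unfold Matrix.IsHermitian at *
  rw [conjTranspose_smul, hM]
  simp

private lemma psd_smul {M : Matrix (Fin n) (Fin n) ℂ} (hM : M.PosSemidef) {r : ℝ}
    (hr : 0 ≤ r) : ((r : ℂ) • M).PosSemidef := by
  refine PosSemidef.of_dotProduct_mulVec_nonneg (herm_smul hM.1 r) fun x => ?_
  rw [smul_mulVec, dotProduct_smul]
  exact smul_nonneg (Complex.zero_le_real.mpr hr) (hM.dotProduct_mulVec_nonneg x)

private lemma posdef_smul {M : Matrix (Fin n) (Fin n) ℂ} (hM : M.PosDef) {r : ℝ}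
    (hr : 0 < r) : ((r : ℂ) • M).PosDef := by
  refine PosDef.of_dotProduct_mulVec_pos (herm_smul hM.1 r) fun x hx => ?_
  rw [smul_mulVec, dotProduct_smul]
  exact smul_pos (Complex.zero_lt_real.mpr hr) (hM.dotProduct_mulVec_pos hx)

private lemma posdef_add_psd {M N : Matrix (Fin n) (Fin n) ℂ} (hM : M.PosDef)
    (hN : N.PosSemidef) : (M + N).PosDef :=
  PosDef.of_dotProduct_mulVec_pos (hM.1.add hN.1) fun x hx => by
    rw [add_mulVec, dotProduct_add]
    exact add_pos_of_pos_of_nonneg (hM.dotProduct_mulVec_pos hx) (hN.dotProduct_mulVec_nonneg x)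

private lemma posdef_convex {A B : Matrix (Fin n) (Fin n) ℂ} (hA : A.PosDef) (hB : B.PosDef)
    {a b : ℝ} (ha : 0 ≤ a) (hb : 0 ≤ b) (hab : a + b = 1) :
    ((a : ℂ) • A + (b : ℂ) • B).PosDef := by
  rcases ha.lt_or_eq with ha' | ha'
  · exact posdef_add_psd (posdef_smul hA ha') (psd_smul hB.posSemidef hb)
  · have hb1 : b = 1 := by linarith
    subst hb1
    rw [← ha', Complex.ofReal_zero, Complex.ofReal_one, zero_smul, one_smul, zero_add]
    exact hB

private lemma conj_quad (M N : Matrix (Fin n) (Fin n) ℂ) (hM : M.IsHermitian) (x : Fin n → ℂ) :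
    star x ⬝ᵥ ((M * N * M) *ᵥ x) = star (M *ᵥ x) ⬝ᵥ (N *ᵥ (M *ᵥ x)) := by
  rw [star_mulVec, hM.eq, ← mulVec_mulVec, ← mulVec_mulVec, dotProduct_mulVec]

private lemma key_identity (ν : ℂ) (A B : Matrix (Fin n) (Fin n) ℂ)
    (hA : Invertible A) (hB : Invertible B) (hC : Invertible ((1 - ν) • B + ν • A)) :
    ((1 - ν) • A + ν • B) - ((1 - ν) • A⁻¹ + ν • B⁻¹)⁻¹
      = (ν * (1 - ν)) • ((A - B) * ((1 - ν) • B + ν • A)⁻¹ * (A - B)) := by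
  set C := (1 - ν) • B + ν • A with hCdef
  have h1 : (1 - ν) • A⁻¹ + ν • B⁻¹ = B⁻¹ * C * A⁻¹ := by
    rw [hCdef, mul_add, add_mul]
    rw [Matrix.mul_smul, Matrix.mul_smul, Matrix.smul_mul, Matrix.smul_mul,
      Matrix.inv_mul_of_invertible B, Matrix.mul_assoc, Matrix.mul_inv_of_invertible A,
      Matrix.one_mul, Matrix.mul_one, add_comm]
  have h2 : ((1 - ν) • A⁻¹ + ν • B⁻¹)⁻¹ = A * C⁻¹ * B := by
    rw [h1, Matrix.mul_inv_rev, Matrix.mul_inv_rev, Matrix.inv_inv_of_invertible,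
      Matrix.inv_inv_of_invertible, Matrix.mul_assoc]
  rw [h2]
  have hAC : A - C = (1 - ν) • (A - B) := by rw [hCdef]; module
  have hCB : C - B = ν • (A - B) := by rw [hCdef]; module
  have h3 : (ν * (1 - ν)) • ((A - B) * C⁻¹ * (A - B))
      = (A - C) * C⁻¹ * (C - B) := by
    rw [hAC, hCB, Matrix.smul_mul, Matrix.smul_mul, Matrix.mul_smul, smul_smul,
      mul_comm ν (1 - ν)]
  have h4 : (1 - ν) • A + ν • B = A + B - C := by rw [hCdef]; module
  rw [h3, h4]
  simp only [Matrix.sub_mul, Matrix.mul_sub, Matrix.mul_assoc,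
    Matrix.inv_mul_of_invertible, Matrix.mul_inv_of_invertible, Matrix.mul_one,
    Matrix.one_mul]
  abel

private lemma inv_sub_inv_decomp (C : Matrix (Fin n) (Fin n) ℂ)
    (hC : Invertible C) (h1C : Invertible (1 - C)) :
    C⁻¹ - (1 - C)⁻¹ = (1 - C)⁻¹ *
      ((1 - C - C) * C⁻¹ * (1 - C - C) + (1 - C - C)) * (1 - C)⁻¹ := by
  have hGa : (1 - C - C) * C⁻¹ * (1 - C - C) + (1 - C - C)
      = (1 - C) * C⁻¹ * (1 - C) - (1 - C) := by
    simp only [Matrix.sub_mul, Matrix.mul_sub, Matrix.mul_assoc, Matrix.mul_one,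
      Matrix.one_mul, Matrix.inv_mul_of_invertible, Matrix.mul_inv_of_invertible]
    abel
  rw [hGa, Matrix.mul_sub, Matrix.sub_mul,
    Matrix.mul_assoc (1 - C) C⁻¹ (1 - C), Matrix.inv_mul_cancel_left_of_invertible,
    Matrix.mul_assoc C⁻¹ (1 - C) (1 - C)⁻¹, Matrix.mul_inv_of_invertible,
    Matrix.mul_one, Matrix.inv_mul_of_invertible, Matrix.one_mul]

/-- `A'∇_μB' - A'!_μB' ≤ A∇_μB - A!_μB` for `0 < A, B ≤ ½I`, with equality (when
`0 < μ < 1`) iff `A = B`. -/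
theorem operator_kyFan_arith_harm (μ : ℝ) (hμ0 : 0 ≤ μ) (hμ1 : μ ≤ 1)
    (n : ℕ) (A B : Matrix (Fin n) (Fin n) ℂ) (hA : A.PosDef) (hB : B.PosDef)
    (hA2 : ((2:ℝ)⁻¹ • (1 : Matrix (Fin n) (Fin n) ℂ) - A).PosSemidef)
    (hB2 : ((2:ℝ)⁻¹ • (1 : Matrix (Fin n) (Fin n) ℂ) - B).PosSemidef) :
    ((((1 - μ) • A + μ • B) - ((1 - μ) • A⁻¹ + μ • B⁻¹)⁻¹) -
      (((1 - μ) • (1 - A) + μ • (1 - B)) -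
        ((1 - μ) • (1 - A)⁻¹ + μ • (1 - B)⁻¹)⁻¹)).PosSemidef ∧
    (0 < μ → μ < 1 →
      ((((1 - μ) • (1 - A) + μ • (1 - B)) - ((1 - μ) • (1 - A)⁻¹ + μ • (1 - B)⁻¹)⁻¹ =
        ((1 - μ) • A + μ • B) - ((1 - μ) • A⁻¹ + μ • B⁻¹)⁻¹) ↔ A = B)) := by
  have hc1 : ((1 - μ : ℝ) : ℂ) = 1 - (μ : ℂ) := by push_cast; ring
  have hc2 : (((2:ℝ)⁻¹ : ℝ) : ℂ) = (2 : ℂ)⁻¹ := by push_cast; ring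
  have hc3 : ((2 : ℝ) : ℂ) = (2 : ℂ) := by push_cast; ring
  simp only [rsmul_eq, hc1, hc2, Complex.ofReal_inv, Complex.ofReal_ofNat] at hA2 hB2 ⊢
  set ν : ℂ := (μ : ℂ) with hνdef
  -- the "center" matrix
  set C : Matrix (Fin n) (Fin n) ℂ := (1 - ν) • B + ν • A with hCdef
  set D : Matrix (Fin n) (Fin n) ℂ := A - B with hDdef
  have hDherm : Dᴴ = D := by rw [hDdef]; exact hA.1.sub hB.1
  -- C is positive definite
  have hCpd : C.PosDef := by
    have := posdef_convex hB hA (by linarith : (0:ℝ) ≤ 1 - μ) hμ0 (by ring)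
    rwa [hc1] at this
  -- half identity for C
  have hidC : (2:ℂ)⁻¹ • (1 : Matrix (Fin n) (Fin n) ℂ) - C
      = (1 - ν) • ((2:ℂ)⁻¹ • 1 - B) + ν • ((2:ℂ)⁻¹ • 1 - A) := by
    rw [hCdef]; module
  have hC2 : ((2:ℂ)⁻¹ • (1 : Matrix (Fin n) (Fin n) ℂ) - C).PosSemidef := by
    rw [hidC]
    refine psd_add ?_ ?_
    · have := psd_smul hB2 (by linarith : (0:ℝ) ≤ 1 - μ); rwa [hc1] at this
    · exact psd_smul hA2 hμ0
  have hhalf1 : ((2:ℂ)⁻¹ • (1 : Matrix (Fin n) (Fin n) ℂ)).PosDef := by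
    have := posdef_smul (Matrix.PosDef.one (n := Fin n) (R := ℂ)) (by norm_num : (0:ℝ) < 2⁻¹)
    rwa [hc2] at this
  have posdef_one_sub : ∀ (M : Matrix (Fin n) (Fin n) ℂ),
      ((2:ℂ)⁻¹ • (1 : Matrix (Fin n) (Fin n) ℂ) - M).PosSemidef → (1 - M).PosDef := by
    intro M hM
    have hid : (1 : Matrix (Fin n) (Fin n) ℂ) - M
        = (2:ℂ)⁻¹ • 1 + ((2:ℂ)⁻¹ • 1 - M) := by module
    rw [hid]
    exact posdef_add_psd hhalf1 hM
  have hApd' : (1 - A).PosDef := posdef_one_sub A hA2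
  have hBpd' : (1 - B).PosDef := posdef_one_sub B hB2
  have h1Cpd : (1 - C).PosDef := posdef_one_sub C hC2
  -- invertibility
  haveI invA : Invertible A := hA.isUnit.invertible
  haveI invB : Invertible B := hB.isUnit.invertible
  haveI invC : Invertible C := hCpd.isUnit.invertible
  haveI invA' : Invertible (1 - A) := hApd'.isUnit.invertible
  haveI invB' : Invertible (1 - B) := hBpd'.isUnit.invertible
  haveI inv1C : Invertible (1 - C) := h1Cpd.isUnit.invertible
  -- key identities
  have hkey1 : ((1 - ν) • A + ν • B) - ((1 - ν) • A⁻¹ + ν • B⁻¹)⁻¹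
      = (ν * (1 - ν)) • (D * C⁻¹ * D) :=
    key_identity ν A B invA invB invC
  have hCC' : (1 - ν) • (1 - B) + ν • (1 - A) = 1 - C := by rw [hCdef]; module
  have hDD' : (1 - A) - (1 - B) = -D := by rw [hDdef]; module
  have invC'' : Invertible ((1 - ν) • (1 - B) + ν • (1 - A)) := by rw [hCC']; exact inv1C
  have hkey2 : ((1 - ν) • (1 - A) + ν • (1 - B)) - ((1 - ν) • (1 - A)⁻¹ + ν • (1 - B)⁻¹)⁻¹
      = (ν * (1 - ν)) • (D * (1 - C)⁻¹ * D) := by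
    have := key_identity ν (1 - A) (1 - B) invA' invB' invC''
    rwa [hCC', hDD', Matrix.neg_mul, Matrix.mul_neg, Matrix.neg_mul, neg_neg] at this
  -- the difference
  have hdiff : (((1 - ν) • A + ν • B) - ((1 - ν) • A⁻¹ + ν • B⁻¹)⁻¹) -
      (((1 - ν) • (1 - A) + ν • (1 - B)) - ((1 - ν) • (1 - A)⁻¹ + ν • (1 - B)⁻¹)⁻¹)
      = (ν * (1 - ν)) • (D * (C⁻¹ - (1 - C)⁻¹) * D) := by
    rw [hkey1, hkey2, ← smul_sub]
    congr 1
    noncomm_ring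
  -- positivity of the middle factor
  set F : Matrix (Fin n) (Fin n) ℂ := 1 - C - C with hFdef
  have hFpsd : F.PosSemidef := by
    have h2F : ((2:ℝ) : ℂ) • ((2:ℂ)⁻¹ • (1 : Matrix (Fin n) (Fin n) ℂ) - C) = F := by
      rw [hc3, hFdef]; module
    rw [← h2F]
    exact psd_smul hC2 (by norm_num)
  have hFherm : Fᴴ = F := hFpsd.1
  have hFCF : (F * C⁻¹ * F).PosSemidef := by
    have := (hCpd.inv.posSemidef).conjTranspose_mul_mul_same F
    rwa [hFherm] at this
  have hGpsd : (F * C⁻¹ * F + F).PosSemidef := psd_add hFCF hFpsd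
  have h1Cinvherm : ((1 - C)⁻¹)ᴴ = (1 - C)⁻¹ := h1Cpd.inv.1
  have hEdec : C⁻¹ - (1 - C)⁻¹ = (1 - C)⁻¹ * (F * C⁻¹ * F + F) * (1 - C)⁻¹ := by
    rw [hFdef]; exact inv_sub_inv_decomp C invC inv1C
  have hEpsd : (C⁻¹ - (1 - C)⁻¹).PosSemidef := by
    rw [hEdec]
    have := hGpsd.conjTranspose_mul_mul_same ((1 - C)⁻¹)
    rwa [h1Cinvherm] at this
  have hDEDpsd : (D * (C⁻¹ - (1 - C)⁻¹) * D).PosSemidef := by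
    have := hEpsd.conjTranspose_mul_mul_same D
    rwa [hDherm] at this
  have hk : (ν * (1 - ν)) = ((μ * (1 - μ) : ℝ) : ℂ) := by rw [hνdef]; push_cast; ring
  constructor
  · rw [hdiff, hk]
    exact psd_smul hDEDpsd (mul_nonneg hμ0 (by linarith))
  · intro h0 h1
    constructor
    · intro heq
      have hzero : (ν * (1 - ν)) • (D * (C⁻¹ - (1 - C)⁻¹) * D) = 0 := by
        rw [← hdiff, heq, sub_self]
      have hkne : (ν * (1 - ν)) ≠ 0 := by
        rw [hk]
        exact_mod_cast (mul_pos h0 (by linarith : (0:ℝ) < 1 - μ)).ne'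
      have hDED : D * (C⁻¹ - (1 - C)⁻¹) * D = 0 :=
        (smul_eq_zero.mp hzero).resolve_left hkne
      -- show D = 0
      have hDx : ∀ x : Fin n → ℂ, D *ᵥ x = 0 := by
        intro x
        set y := D *ᵥ x with hydef
        have hq : star y ⬝ᵥ ((C⁻¹ - (1 - C)⁻¹) *ᵥ y) = 0 := by
          have h := conj_quad D (C⁻¹ - (1 - C)⁻¹) hDherm x
          rw [hDED, Matrix.zero_mulVec, dotProduct_zero, ← hydef] at h
          exact h.symm
        have hEy : (C⁻¹ - (1 - C)⁻¹) *ᵥ y = 0 :=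
          (hEpsd.dotProduct_mulVec_zero_iff y).mp hq
        set z := (1 - C)⁻¹ *ᵥ y with hzdef
        have hGz : star z ⬝ᵥ ((F * C⁻¹ * F + F) *ᵥ z) = 0 := by
          have h := conj_quad ((1 - C)⁻¹) (F * C⁻¹ * F + F) h1Cinvherm y
          rw [← hEdec, hEy, dotProduct_zero, ← hzdef] at h
          exact h.symm
        have hFz : F *ᵥ z = 0 := by
          rw [add_mulVec, dotProduct_add] at hGz
          have h2 := (add_eq_zero_iff_of_nonneg (hFCF.dotProduct_mulVec_nonneg z) (hFpsd.dotProduct_mulVec_nonneg z)).mp hGz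
          exact (hFpsd.dotProduct_mulVec_zero_iff z).mp h2.2
        have hyz : y = (1 - C) *ᵥ z := by
          rw [hzdef, mulVec_mulVec, Matrix.mul_inv_of_invertible, one_mulVec]
        have hcomm : F * (1 - C) = (1 - C) * F := by rw [hFdef]; noncomm_ring
        have hFy : F *ᵥ y = 0 := by
          rw [hyz, mulVec_mulVec, hcomm, ← mulVec_mulVec, hFz, mulVec_zero]
        have hhalfy : ((2:ℂ)⁻¹ • (1 : Matrix (Fin n) (Fin n) ℂ) - C) *ᵥ y = 0 := by
          have hsc : (2:ℂ)⁻¹ • F = (2:ℂ)⁻¹ • (1 : Matrix (Fin n) (Fin n) ℂ) - C := by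
            rw [hFdef]; module
          rw [← hsc, smul_mulVec, hFy, smul_zero]
        have hsplit : (1 - ν) • (star y ⬝ᵥ (((2:ℂ)⁻¹ • 1 - B) *ᵥ y))
            + ν • (star y ⬝ᵥ (((2:ℂ)⁻¹ • 1 - A) *ᵥ y)) = 0 := by
          have := congrArg (fun v => star y ⬝ᵥ v) hhalfy
          simp only [dotProduct_zero] at this
          rw [hidC, add_mulVec, smul_mulVec, smul_mulVec,
            dotProduct_add, dotProduct_smul, dotProduct_smul] at this
          exact this
        have hν1 : (1 - ν) = ((1 - μ : ℝ) : ℂ) := hc1.symm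
        have hBy : ((2:ℂ)⁻¹ • 1 - B) *ᵥ y = 0 := by
          have t1 : (0:ℂ) ≤ (1 - ν) • (star y ⬝ᵥ (((2:ℂ)⁻¹ • 1 - B) *ᵥ y)) := by
            rw [hν1]
            exact smul_nonneg (Complex.zero_le_real.mpr (by linarith)) (hB2.dotProduct_mulVec_nonneg y)
          have t2 : (0:ℂ) ≤ ν • (star y ⬝ᵥ (((2:ℂ)⁻¹ • 1 - A) *ᵥ y)) := by
            rw [hνdef]
            exact smul_nonneg (Complex.zero_le_real.mpr hμ0) (hA2.dotProduct_mulVec_nonneg y)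
          have h2 := (add_eq_zero_iff_of_nonneg t1 t2).mp hsplit
          have h3 : star y ⬝ᵥ (((2:ℂ)⁻¹ • 1 - B) *ᵥ y) = 0 := by
            have := h2.1
            rw [smul_eq_zero] at this
            refine this.resolve_left ?_
            rw [hν1]
            exact_mod_cast (by linarith : (0:ℝ) < 1 - μ).ne'
          exact (hB2.dotProduct_mulVec_zero_iff y).mp h3
        have hAy : ((2:ℂ)⁻¹ • 1 - A) *ᵥ y = 0 := by
          have h2 := (add_eq_zero_iff_of_nonneg
            (by rw [hν1]; exact smul_nonneg (Complex.zero_le_real.mpr (by linarith)) (hB2.dotProduct_mulVec_nonneg y))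
            (by rw [hνdef]; exact smul_nonneg (Complex.zero_le_real.mpr hμ0) (hA2.dotProduct_mulVec_nonneg y))).mp hsplit
          have h3 : star y ⬝ᵥ (((2:ℂ)⁻¹ • 1 - A) *ᵥ y) = 0 := by
            have := h2.2
            rw [smul_eq_zero] at this
            refine this.resolve_left ?_
            rw [hνdef]
            exact_mod_cast h0.ne'
          exact (hA2.dotProduct_mulVec_zero_iff y).mp h3
        have hDy : D *ᵥ y = 0 := by
          have hDid : D = ((2:ℂ)⁻¹ • 1 - B) - ((2:ℂ)⁻¹ • 1 - A) := by rw [hDdef]; module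
          rw [hDid, sub_mulVec, hBy, hAy, sub_zero]
        have hyy : star y ⬝ᵥ y = 0 := by
          have h := conj_quad D 1 hDherm x
          rw [Matrix.mul_one, ← Matrix.mulVec_mulVec, Matrix.one_mulVec, ← hydef,
            hDy, dotProduct_zero] at h
          exact h.symm
        rw [hydef] at hyy ⊢
        exact dotProduct_star_self_eq_zero.mp hyy
      have hD0 : D = 0 := by
        ext i j
        have := congrFun (hDx (Pi.single j 1)) i
        simpa [Matrix.mulVec_single] using this
      rw [hDdef] at hD0
      exact sub_eq_zero.mp hD0
    · intro hAB
      subst hAB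
      have hone : ∀ (X : Matrix (Fin n) (Fin n) ℂ), (1 - ν) • X + ν • X = X := by
        intro X; module
      rw [hone, hone, hone, hone, Matrix.inv_inv_of_invertible,
        Matrix.inv_inv_of_invertible, sub_self, sub_self]
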